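/- arXiv:1005.5278 — 4 statements merged into one kernel-verified Lean document; each statement's English description precedes it below -/
import Mathlib

section
/- Higman's lemma: if (S, ≤) is a well-quasi-order, then the set S* of finite sequences over S, ordered by the subsequence-embedding order (a sequence u embeds into v if there is a strictly increasing map of positions of u into positions of v such that corresponding elements are related by ≤), is also a well-quasi-order. -/
/-- Subsequence-embedding order on finite sequences: `u` embeds into `v` if there
is a strictly increasing map of positions of `u` into positions of `v` such that
corresponding elements are related by `r`. -/
inductive ListEmb {S : Type*} (r : S → S → Prop) : List S → List S → Prop
  | nil (l : List S) : ListEmb r [] l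
  | cons {a b : S} {l₁ l₂ : List S} : r a b → ListEmb r l₁ l₂ → ListEmb r (a :: l₁) (b :: l₂)
  | skip {b : S} {l₁ l₂ : List S} : ListEmb r l₁ l₂ → ListEmb r l₁ (b :: l₂)

theorem listEmb_iff {S : Type*} (r : S → S → Prop) (l₁ l₂ : List S) :
    ListEmb r l₁ l₂ ↔ List.SublistForall₂ r l₁ l₂ := by
  constructor
  · intro h; induction h with
    | nil => exact .nil
    | cons h _ ih => exact .cons h ih
    | skip _ ih => exact .cons_right ih
  · intro h; induction h with
    | nil => exact .nil _
    | cons h _ ih => exact .cons h ih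
    | cons_right _ ih => exact .skip ih

/-- Higman's lemma. -/
theorem higman {S : Type*} (r : S → S → Prop)
    (hrefl : Reflexive r) (htrans : Transitive r)
    (hwqo : ∀ f : ℕ → S, ∃ i j, i < j ∧ r (f i) (f j)) :
    Reflexive (ListEmb r) ∧ Transitive (ListEmb r) ∧
      ∀ f : ℕ → List S, ∃ i j, i < j ∧ ListEmb r (f i) (f j) := by
  haveI : IsRefl S r := ⟨hrefl⟩
  haveI : IsTrans S r := ⟨htrans⟩
  refine ⟨fun l => ?_, fun a b c hab hbc => ?_, fun f => ?_⟩
  · exact (listEmb_iff r l l).2 (refl_of (List.SublistForall₂ r) l)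
  · exact (listEmb_iff r a c).2 (trans_of (List.SublistForall₂ r)
      ((listEmb_iff r a b).1 hab) ((listEmb_iff r b c).1 hbc))
  · have hs : (Set.univ : Set S).PartiallyWellOrderedOn r :=
      Set.partiallyWellOrderedOn_iff_exists_lt.2 fun g _ => hwqo g
    haveI : IsPreorder S r := { refl := hrefl, trans := htrans }
    have := Set.PartiallyWellOrderedOn.partiallyWellOrderedOn_sublistForall₂ r hs
    obtain ⟨i, j, hij, h⟩ := this.exists_lt (f := f) (by simp [Set.mem_setOf_eq])
    exact ⟨i, j, hij, (listEmb_iff r _ _).2 h⟩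
end

section
/- Kruskal's Tree Theorem for a finite signature: if S is a finite set of function symbols (each with a fixed arity), then any infinite sequence t_1, t_2, ... of first-order terms built from S contains two terms t_i and t_j with i < j such that t_i is homeomorphically embedded in t_j. -/
/-- First-order terms over a signature `S`: finite rooted trees whose nodes are
labeled by symbols of `S`. -/
inductive Term (S : Type*) where
  | node (s : S) (ts : List (Term S))

/-- A term is arity-respecting (well-formed) if the number of children of each
node equals the arity of its label. -/
inductive WF {S : Type*} (ar : S → ℕ) : Term S → Prop
  | node {s : S} {ts : List (Term S)} :
      ts.length = ar s → (∀ t ∈ ts, WF ar t) → WF ar (Term.node s ts)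

/-- The homeomorphic embedding on terms: `e ⊴ s(f₁,…,fₙ)` whenever `e ⊴ fᵢ` for
some `i` (diving), and `s(e₁,…,eₙ) ⊴ s(f₁,…,fₙ)` whenever `eᵢ ⊴ fᵢ` for all `i`
(coupling, which in particular relates equal constants). -/
inductive Emb {S : Type*} : Term S → Term S → Prop
  | dive {e : Term S} {s : S} {fs : List (Term S)} {f : Term S} :
      f ∈ fs → Emb e f → Emb e (Term.node s fs)
  | couple {s : S} {es fs : List (Term S)} (h : es.length = fs.length) :
      (∀ i : Fin es.length, Emb (es.get i) (fs.get (Fin.cast h i))) →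
      Emb (Term.node s es) (Term.node s fs)

section KruskalProof

variable {S : Type*}

theorem sizeOf_lt_of_mem {t : Term S} {s : S} {ts : List (Term S)} (h : t ∈ ts) :
    sizeOf t < sizeOf (Term.node s ts) := by
  have := List.sizeOf_lt_of_mem h
  simp only [Term.node.sizeOf_spec]
  omega

theorem Term.indOn {P : Term S → Prop} (t : Term S)
    (h : ∀ s ts, (∀ x ∈ ts, P x) → P (Term.node s ts)) : P t :=
  match t with
  | .node s ts => h s ts (fun x _ => Term.indOn x h)
termination_by sizeOf t
decreasing_by exact sizeOf_lt_of_mem (by assumption)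

def Term.label : Term S → S
  | .node s _ => s

def Term.children : Term S → List (Term S)
  | .node _ ts => ts

theorem Term.eta (t : Term S) : t = Term.node t.label t.children := by
  cases t; rfl

theorem sizeOf_children_lt {u t : Term S} (h : u ∈ t.children) : sizeOf u < sizeOf t := by
  cases t; exact sizeOf_lt_of_mem h

theorem WF.children_mem {ar : S → ℕ} {u t : Term S} (h : WF ar t)
    (hu : u ∈ t.children) : WF ar u := by
  cases h with | node hlen hts => exact hts u hu

theorem WF.length_eq {ar : S → ℕ} {t : Term S} (h : WF ar t) :
    t.children.length = ar t.label := by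
  cases h with | node hlen _ => exact hlen

theorem emb_refl (t : Term S) : Emb t t := by
  induction t using Term.indOn with
  | h s ts IH => exact Emb.couple rfl (fun i => IH _ (ts.get_mem i))

theorem emb_trans {e f g : Term S} (hef : Emb e f) (hfg : Emb f g) : Emb e g := by
  induction g using Term.indOn generalizing e f with
  | h sg gs IH =>
    cases hfg with
    | dive hmem h' => exact Emb.dive hmem (IH _ hmem hef h')
    | couple hlen hall =>
      cases hef with
      | dive hmem h' =>
        obtain ⟨i, rfl⟩ := List.mem_iff_get.1 hmem
        exact Emb.dive (List.get_mem _ _) (IH _ (List.get_mem _ _) h' (hall i))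
      | couple hlen2 hall2 =>
        exact Emb.couple (hlen2.trans hlen) (fun i =>
          IH _ (List.get_mem _ _) (hall2 i) (hall (Fin.cast hlen2 i)))

instance : IsRefl (Term S) Emb := ⟨emb_refl⟩
instance : IsTrans (Term S) Emb := ⟨fun _ _ _ => emb_trans⟩
instance : IsPreorder (Term S) Emb where
  refl := emb_refl
  trans := fun _ _ _ => emb_trans

theorem pwo_WF [Finite S] (ar : S → ℕ) :
    {u : Term S | WF ar u}.PartiallyWellOrderedOn Emb := by
  rw [Set.PartiallyWellOrderedOn.iff_not_exists_isMinBadSeq sizeOf]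
  rintro ⟨f, hfbad, hfmin⟩
  set C : Set (Term S) := {u | ∃ n, u ∈ (f n).children} with hCdef
  have hC : C.PartiallyWellOrderedOn Emb := by
    rw [Set.partiallyWellOrderedOn_iff_exists_lt]
    intro g hg
    by_contra hcon
    push_neg at hcon
    choose k hk using hg
    obtain ⟨n₀, hn₀⟩ : ∃ n₀, k n₀ = sInf (Set.range k) := Nat.sInf_mem (Set.range_nonempty k)
    have hmin : ∀ n, k n₀ ≤ k n := fun n => hn₀ ▸ Nat.sInf_le ⟨n, rfl⟩
    set h : ℕ → Term S := fun i => if i < k n₀ then f i else g (n₀ + (i - k n₀)) with hh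
    have hsz : sizeOf (h (k n₀)) < sizeOf (f (k n₀)) := by
      have hhk : h (k n₀) = g n₀ := by simp [hh]
      rw [hhk]
      exact sizeOf_children_lt (hk n₀)
    refine hfmin (k n₀) h (fun m hm => (if_pos hm).symm) hsz ⟨?_, ?_⟩
    · intro i
      by_cases hi : i < k n₀
      · simpa [hh, hi] using hfbad.1 i
      · simp only [hh, if_neg hi]
        exact (hfbad.1 (k (n₀ + (i - k n₀)))).children_mem (hk _)
    · intro i j hij hemb
      by_cases hj : j < k n₀
      · have hi : i < k n₀ := hij.trans hj
        simp only [hh, if_pos hi, if_pos hj] at hemb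
        exact hfbad.2 i j hij hemb
      · by_cases hi : i < k n₀
        · have hemb' : Emb (f i) (g (n₀ + (j - k n₀))) := by
            simpa [hh, hi, hj] using hemb
          have hdive : Emb (f i) (f (k (n₀ + (j - k n₀)))) := by
            rw [Term.eta (f (k (n₀ + (j - k n₀))))]
            exact Emb.dive (hk _) hemb'
          exact hfbad.2 i (k (n₀ + (j - k n₀))) (lt_of_lt_of_le hi (hmin _)) hdive
        · have hemb' : Emb (g (n₀ + (i - k n₀))) (g (n₀ + (j - k n₀))) := by
            simpa [hh, hi, hj] using hemb
          exact hcon _ _ (by omega) hemb'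
  have hL := Set.PartiallyWellOrderedOn.partiallyWellOrderedOn_sublistForall₂ Emb hC
  obtain ⟨s, hs⟩ := Finite.exists_infinite_fiber (fun n => (f n).label)
  set p : ℕ → Prop := fun n => (f n).label = s with hp
  have hinf : {n | p n}.Infinite := by
    have : {n | p n} = (fun n => (f n).label) ⁻¹' {s} := by
      ext n; simp [hp]
    rw [this, ← Set.infinite_coe_iff]
    exact hs
  have hps : ∀ n, (f (Nat.nth p n)).label = s := fun n => Nat.nth_mem_of_infinite hinf n
  obtain ⟨a, b, hab, hemb⟩ := Set.partiallyWellOrderedOn_iff_exists_lt.1 hL (fun n => (f (Nat.nth p n)).children)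
    (fun n x hx => ⟨Nat.nth p n, hx⟩)
  obtain ⟨l, hl, hsub⟩ := List.sublistForall₂_iff.1 hemb
  have hlen1 := (hfbad.1 (Nat.nth p a)).length_eq
  have hlen2 := (hfbad.1 (Nat.nth p b)).length_eq
  have e1 : (f (Nat.nth p a)).children.length = l.length := hl.length_eq
  have hlenl : l.length = (f (Nat.nth p b)).children.length := by
    rw [← e1, hlen1, hlen2, hps a, hps b]
  have hleq : l = (f (Nat.nth p b)).children := hsub.eq_of_length hlenl
  subst hleq
  have hforall := List.forall₂_iff_get.1 hl
  have hfinal : Emb (f (Nat.nth p a)) (f (Nat.nth p b)) := by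
    rw [Term.eta (f (Nat.nth p a)), Term.eta (f (Nat.nth p b)), hps a, hps b]
    exact Emb.couple hforall.1 (fun i => hforall.2 i.1 i.2 (hforall.1 ▸ i.2))
  exact hfbad.2 _ _ ((Nat.nth_lt_nth hinf).2 hab) hfinal

end KruskalProof

/-- Kruskal's Tree Theorem for a finite signature. -/
theorem kruskal_tree_theorem {S : Type*} [Finite S] (ar : S → ℕ)
    (t : ℕ → Term S) (hwf : ∀ n, WF ar (t n)) :
    ∃ i j, i < j ∧ Emb (t i) (t j) := by
  exact Set.partiallyWellOrderedOn_iff_exists_lt.1 (pwo_WF ar) t hwf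
end

section
/- The homeomorphic embedding relation ⊴ on terms over a finite signature is a well-quasi-order: it is reflexive, transitive, and every infinite sequence of terms t_1, t_2, ... contains indices i < j with t_i ⊴ t_j. -/
namespace KruskalAux

variable {S : Type*}

lemma child_sizeOf {s : S} {ts : List (Term S)} {t : Term S} (h : t ∈ ts) :
    sizeOf t < sizeOf (Term.node s ts) := by
  have := List.sizeOf_lt_of_mem h
  simp only [Term.node.sizeOf_spec]
  omega

theorem emb_refl : ∀ t : Term S, Emb t t
  | .node s ts => by
      refine Emb.couple rfl fun i => ?_
      have h := child_sizeOf (s := s) (ts.get_mem i)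
      have := emb_refl (ts.get i)
      simpa using this
termination_by t => sizeOf t
decreasing_by exact h

theorem emb_trans : ∀ (a b c : Term S), Emb a b → Emb b c → Emb a c
  | _, _, .node s fs, hab, .dive hf hbf => Emb.dive hf (emb_trans _ _ _ hab hbf)
  | a, .node s es, .node _ fs, hab, .couple h hpt => by
      cases hab with
      | dive he hae =>
          obtain ⟨i, rfl⟩ := List.mem_iff_get.mp he
          exact Emb.dive (fs.get_mem _) (emb_trans _ _ _ hae (hpt i))
      | couple h' hpt' =>
          refine Emb.couple (h'.trans h) fun i => ?_
          have := emb_trans _ _ _ (hpt' i) (hpt (Fin.cast h' i))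
          simpa using this
termination_by a b c => sizeOf c
decreasing_by
  · exact child_sizeOf hf
  · exact child_sizeOf (fs.get_mem _)
  · exact child_sizeOf (fs.get_mem _)

instance : IsRefl (Term S) Emb := ⟨emb_refl⟩
instance : IsTrans (Term S) Emb := ⟨emb_trans⟩
instance : IsPreorder (Term S) Emb where
  refl := emb_refl
  trans := emb_trans

/-- The label of the root. -/
def label : Term S → S
  | .node s _ => s

/-- The children of the root. -/
def children : Term S → List (Term S)
  | .node _ ts => ts

lemma node_label_children (t : Term S) : t = Term.node (label t) (children t) := by
  cases t; rfl

lemma wf_children {ar : S → ℕ} {t : Term S} (h : WF ar t) : ∀ u ∈ children t, WF ar u := by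
  cases h with
  | node h1 h2 => exact h2

lemma wf_children_length {ar : S → ℕ} {t : Term S} (h : WF ar t) :
    (children t).length = ar (label t) := by
  cases h with
  | node h1 h2 => exact h1

lemma couple_of_forall₂ {s : S} {es fs : List (Term S)} (h : List.Forall₂ Emb es fs) :
    Emb (Term.node s es) (Term.node s fs) := by
  obtain ⟨hl, hg⟩ := List.forall₂_iff_get.mp h
  exact Emb.couple hl fun i => hg i i.isLt (hl ▸ i.isLt)

open Set.PartiallyWellOrderedOn in
theorem wf_pwo [Finite S] (ar : S → ℕ) :
    {t : Term S | WF ar t}.PartiallyWellOrderedOn Emb := by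
  rw [iff_not_exists_isMinBadSeq (fun t : Term S => sizeOf t)]
  rintro ⟨f, hf, hmin⟩
  -- the set of children of terms in the sequence
  set C : Set (Term S) := {u | ∃ n, u ∈ children (f n)} with hC
  -- C is partially well ordered by Emb, by minimality of f
  have hCpwo : C.PartiallyWellOrderedOn Emb := by
    rw [iff_forall_not_isBadSeq]
    rintro g ⟨hg1, hg2⟩
    choose φ hφ using hg1
    set N := sInf (Set.range φ) with hN
    obtain ⟨k0, hk0⟩ := Nat.sInf_mem (Set.range_nonempty φ)
    have hle : ∀ k, N ≤ φ k := fun k => Nat.sInf_le ⟨k, rfl⟩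
    set h : ℕ → Term S := fun m => if m < N then f m else g (k0 + (m - N)) with hh
    have hbad : Set.PartiallyWellOrderedOn.IsBadSeq Emb {t : Term S | WF ar t} h := by
      constructor
      · intro m
        by_cases hm : m < N <;> simp only [hh, hm, if_pos, if_neg, if_true, if_false]
        · exact hf.1 m
        · exact wf_children (hf.1 (φ _)) _ (hφ _)
      · intro m n hmn hemb
        by_cases hm : m < N <;> by_cases hn : n < N <;>
          simp only [hh, hm, hn, if_pos, if_neg, if_true, if_false] at hemb
        · exact hf.2 m n hmn hemb
        · -- m < N ≤ n : dive into f (φ (k0 + (n - N)))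
          have hml : m < φ (k0 + (n - N)) := lt_of_lt_of_le hm (hle _)
          refine hf.2 m (φ (k0 + (n - N))) hml ?_
          rw [node_label_children (f (φ (k0 + (n - N))))]
          exact Emb.dive (hφ _) hemb
        · omega
        · refine hg2 (k0 + (m - N)) (k0 + (n - N)) (by omega) hemb
    refine hmin N h (fun m hm => by simp [hh, hm]) ?_ hbad
    -- rank decreases at N
    have hk0' : φ k0 = N := by rw [hN]; exact hk0
    have : g k0 ∈ children (f N) := hk0' ▸ hφ k0
    have hlt : sizeOf (g k0) < sizeOf (f N) := by
      conv_rhs => rw [node_label_children (f N)]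
      exact child_sizeOf this
    simpa [hh] using hlt
  -- Higman + finiteness of S
  have hlists := hCpwo.partiallyWellOrderedOn_sublistForall₂ Emb
  have hS : (Set.univ : Set S).PartiallyWellOrderedOn (· = ·) :=
    Set.finite_univ.partiallyWellOrderedOn
  have hprod := hS.prod hlists
  obtain ⟨m, n, hmn, h1, h2⟩ := hprod.exists_lt (f := fun n => (label (f n), children (f n)))
    (fun n => ⟨Set.mem_univ _, fun x hx => ⟨n, hx⟩⟩)
  replace h1 : label (f m) = label (f n) := h1
  replace h2 : List.SublistForall₂ Emb (children (f m)) (children (f n)) := h2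
  -- equal lengths
  obtain ⟨l, hfa, hsub⟩ := List.sublistForall₂_iff.mp h2
  have hlen : (children (f m)).length = (children (f n)).length := by
    rw [wf_children_length (hf.1 m), wf_children_length (hf.1 n), h1]
  have hl2 : l = children (f n) :=
    hsub.eq_of_length (by rw [← hfa.length_eq, ← hlen])
  subst hl2
  refine hf.2 m n hmn ?_
  rw [node_label_children (f m), node_label_children (f n), h1]
  exact couple_of_forall₂ hfa


end KruskalAux

/-- the homeomorphic embedding on terms over a finite signature is
a well-quasi-order: reflexive, transitive, and every infinite sequence of terms
contains `i < j` with `t i ⊴ t j`. -/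
theorem emb_is_wqo {S : Type*} [Finite S] (ar : S → ℕ) :
    Reflexive (@Emb S) ∧ Transitive (@Emb S) ∧
      ∀ t : ℕ → Term S, (∀ n, WF ar (t n)) → ∃ i j, i < j ∧ Emb (t i) (t j) := by
  refine ⟨fun t => KruskalAux.emb_refl t, fun a b c => KruskalAux.emb_trans a b c, ?_⟩
  intro t ht
  exact (KruskalAux.wf_pwo ar).exists_lt ht
end

section
/- Given the homeomorphic embedding well-quasi-order on terms over a finite signature, every sequence t_1, ..., t_N of terms containing no pair i < j with t_i ⊴ t_j (a 'bad' sequence) built from a fixed finite set of initial subterms has bounded length; equivalently, there is no infinite bad sequence. -/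
namespace TermAux
variable {S : Type*}

def size : Term S → ℕ
  | .node _ ts => 1 + (ts.attach.map (fun x => size x.1)).sum
decreasing_by simp only [Term.node.sizeOf_spec]; have := List.sizeOf_lt_of_mem x.2; omega

lemma size_lt {s : S} {ts : List (Term S)} {t : Term S} (h : t ∈ ts) :
    size t < size (Term.node s ts) := by
  have hm : size t ∈ ts.attach.map (fun x => size x.1) :=
    List.mem_map.2 ⟨⟨t, h⟩, List.mem_attach _ _, rfl⟩
  have := List.single_le_sum (fun (x : ℕ) _ => Nat.zero_le x) _ hm
  rw [size]
  omega

lemma term_ind (P : Term S → Prop)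
    (h : ∀ s ts, (∀ t ∈ ts, P t) → P (Term.node s ts)) : ∀ t, P t := by
  have key : ∀ n, ∀ t : Term S, size t ≤ n → P t := by
    intro n
    induction n with
    | zero => intro t ht; cases t with
      | node s ts => rw [size] at ht; omega
    | succ n ih =>
      intro t ht
      cases t with
      | node s ts =>
        refine h s ts fun u hu => ih u ?_
        have := size_lt (s := s) hu
        omega
  exact fun t => key (size t) t le_rfl

lemma emb_refl : ∀ t : Term S, Emb t t := by
  apply term_ind
  intro s ts ih
  exact Emb.couple rfl (fun i => ih _ (ts.get_mem i))

lemma emb_trans : ∀ {a b c : Term S}, Emb a b → Emb b c → Emb a c := by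
  suffices H : ∀ b c : Term S, Emb b c → ∀ a, Emb a b → Emb a c by
    exact fun {a b c} hab hbc => H b c hbc a hab
  intro b c hbc
  induction hbc with
  | dive hf _ ih => exact fun a hab => Emb.dive hf (ih a hab)
  | @couple s es fs h hcomp ih =>
    intro a hab
    cases hab with
    | @dive e _ _ f hf hef =>
      obtain ⟨i, rfl⟩ := List.mem_iff_get.1 hf
      exact Emb.dive (List.get_mem _ _) (ih i a hef)
    | @couple _ ds _ h' hcomp' =>
      exact Emb.couple (h'.trans h) (fun i => ih (Fin.cast h' i) _ (hcomp' i))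

instance : IsRefl (Term S) Emb := ⟨emb_refl⟩
instance : IsTrans (Term S) Emb := ⟨fun _ _ _ => emb_trans⟩
instance : IsPreorder (Term S) Emb := {}

def children : Term S → List (Term S)
  | .node _ ts => ts

def root : Term S → S
  | .node s _ => s

lemma node_root_children (t : Term S) : t = Term.node (root t) (children t) := by
  cases t; rfl

variable (ar : S → ℕ)

def IsBadSeq (f : ℕ → Term S) : Prop :=
  (∀ n, WF ar (f n)) ∧ ∀ i j, i < j → ¬ Emb (f i) (f j)

lemma wf_children {t : Term S} (h : WF ar t) : ∀ u ∈ children t, WF ar u := by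
  cases h with
  | node h1 h2 => exact h2

lemma len_children {t : Term S} (h : WF ar t) : (children t).length = ar (root t) := by
  cases h with
  | node h1 h2 => exact h1

lemma exists_ext (n : ℕ) (f : ℕ → Term S) (hf : IsBadSeq ar f) :
    ∃ g, IsBadSeq ar g ∧ (∀ m < n, g m = f m) ∧
      ∀ h', IsBadSeq ar h' → (∀ m < n, h' m = f m) → size (g n) ≤ size (h' n) := by
  classical
  have hQ : ∃ k, ∃ g, IsBadSeq ar g ∧ (∀ m < n, g m = f m) ∧ size (g n) = k :=
    ⟨size (f n), f, hf, fun _ _ => rfl, rfl⟩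
  obtain ⟨g, hg1, hg2, hg3⟩ := Nat.find_spec hQ
  refine ⟨g, hg1, hg2, fun h' hh1 hh2 => ?_⟩
  rw [hg3]
  exact Nat.find_min' hQ ⟨h', hh1, hh2, rfl⟩

noncomputable def minExt (n : ℕ) (f : {f : ℕ → Term S // IsBadSeq ar f}) :
    {g : ℕ → Term S // IsBadSeq ar g} :=
  ⟨Classical.choose (exists_ext ar n f.1 f.2),
   (Classical.choose_spec (exists_ext ar n f.1 f.2)).1⟩

lemma minExt_agree (n : ℕ) (f : {f : ℕ → Term S // IsBadSeq ar f}) :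
    ∀ m < n, (minExt ar n f).1 m = f.1 m :=
  (Classical.choose_spec (exists_ext ar n f.1 f.2)).2.1

lemma minExt_min (n : ℕ) (f : {f : ℕ → Term S // IsBadSeq ar f}) {h' : ℕ → Term S}
    (hh1 : IsBadSeq ar h') (hh2 : ∀ m < n, h' m = f.1 m) :
    size ((minExt ar n f).1 n) ≤ size (h' n) :=
  (Classical.choose_spec (exists_ext ar n f.1 f.2)).2.2 h' hh1 hh2

noncomputable def F (f0 : {f : ℕ → Term S // IsBadSeq ar f}) : ℕ → {g : ℕ → Term S // IsBadSeq ar g}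
  | 0 => minExt ar 0 f0
  | n + 1 => minExt ar (n + 1) (F f0 n)

noncomputable def mbs (f0 : {f : ℕ → Term S // IsBadSeq ar f}) (n : ℕ) : Term S :=
  (F ar f0 n).1 n

lemma F_agree (f0 : {f : ℕ → Term S // IsBadSeq ar f}) :
    ∀ n k, k ≤ n → (F ar f0 n).1 k = mbs ar f0 k := by
  intro n
  induction n with
  | zero => intro k hk; interval_cases k; rfl
  | succ n ih =>
    intro k hk
    rcases Nat.lt_or_ge k (n + 1) with h | h
    · rw [show (F ar f0 (n+1)) = minExt ar (n+1) (F ar f0 n) from rfl,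
        minExt_agree ar (n+1) (F ar f0 n) k h]
      exact ih k (Nat.lt_succ_iff.1 h)
    · have : k = n + 1 := le_antisymm hk h
      subst this; rfl

lemma mbs_bad (f0 : {f : ℕ → Term S // IsBadSeq ar f}) : IsBadSeq ar (mbs ar f0) := by
  constructor
  · intro n; exact (F ar f0 n).2.1 n
  · intro i j hij
    rw [← F_agree ar f0 j i hij.le, ← F_agree ar f0 j j le_rfl]
    exact (F ar f0 j).2.2 i j hij

lemma mbs_min (f0 : {f : ℕ → Term S // IsBadSeq ar f}) (n : ℕ) {h' : ℕ → Term S}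
    (hh1 : IsBadSeq ar h') (hh2 : ∀ m < n, h' m = mbs ar f0 m) :
    size (mbs ar f0 n) ≤ size (h' n) := by
  cases n with
  | zero => exact minExt_min ar 0 f0 hh1 (by omega)
  | succ n =>
    refine minExt_min ar (n+1) (F ar f0 n) hh1 ?_
    intro m hm
    rw [hh2 m hm, F_agree ar f0 n m (Nat.lt_succ_iff.1 hm)]


lemma subterms_pwo (f0 : {f : ℕ → Term S // IsBadSeq ar f}) :
    {u : Term S | ∃ n, u ∈ children (mbs ar f0 n)}.PartiallyWellOrderedOn Emb := by
  classical
  rw [Set.partiallyWellOrderedOn_iff_exists_lt]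
  intro h hmem
  by_contra hcon
  push_neg at hcon
  choose nidx hnidx using hmem
  -- find k₀ minimizing nidx
  have hex : ∃ m, ∃ k, nidx k = m := ⟨nidx 0, 0, rfl⟩
  obtain ⟨k₀, hk₀⟩ := Nat.find_spec hex
  have hmin : ∀ k, nidx k₀ ≤ nidx k := by
    intro k
    rw [hk₀]
    exact Nat.find_min' hex ⟨k, rfl⟩
  set n₀ := nidx k₀ with hn₀
  set c : ℕ → Term S := fun j => if j < n₀ then mbs ar f0 j else h (k₀ + (j - n₀)) with hc
  have hdive : ∀ i k, i < nidx k → Emb (mbs ar f0 i) (h k) → False := by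
    intro i k hik hemb
    refine (mbs_bad ar f0).2 i (nidx k) hik ?_
    rw [node_root_children (mbs ar f0 (nidx k))]
    exact Emb.dive (hnidx k) hemb
  have hcbad : IsBadSeq ar c := by
    constructor
    · intro n
      simp only [hc]
      split
      · exact (mbs_bad ar f0).1 n
      · exact wf_children ar ((mbs_bad ar f0).1 _) _ (hnidx _)
    · intro i j hij hemb
      simp only [hc] at hemb
      rcases Nat.lt_or_ge i n₀ with hi | hi <;> rcases Nat.lt_or_ge j n₀ with hj | hj
      · rw [if_pos hi, if_pos hj] at hemb
        exact (mbs_bad ar f0).2 i j hij hemb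
      · rw [if_pos hi, if_neg (by omega)] at hemb
        exact hdive i _ (lt_of_lt_of_le hi (hmin _)) hemb
      · omega
      · rw [if_neg (by omega), if_neg (by omega)] at hemb
        exact hcon (k₀ + (i - n₀)) (k₀ + (j - n₀)) (by omega) hemb
  have hagree : ∀ m < n₀, c m = mbs ar f0 m := fun m hm => if_pos hm
  have := mbs_min ar f0 n₀ hcbad hagree
  have hcn : c n₀ = h k₀ := by simp [hc]
  rw [hcn] at this
  have hlt : size (h k₀) < size (mbs ar f0 n₀) := by
    rw [node_root_children (mbs ar f0 n₀)]
    exact size_lt (hnidx k₀)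
  omega

end TermAux

/-- there is no infinite bad sequence of (arity-respecting) terms
over a finite signature, i.e. no infinite sequence avoiding `t i ⊴ t j` for all
`i < j`; equivalently every bad sequence is finite (has bounded length). -/
theorem no_infinite_bad_sequence {S : Type*} [Finite S] (ar : S → ℕ) :
    ¬ ∃ t : ℕ → Term S, (∀ n, WF ar (t n)) ∧ ∀ i j, i < j → ¬ Emb (t i) (t j) := by
  classical
  rintro ⟨f, hwf, hbad⟩
  open TermAux in
  let f0 : {f : ℕ → Term S // IsBadSeq ar f} := ⟨f, hwf, hbad⟩
  set g := TermAux.mbs ar f0 with hg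
  have hgbad := TermAux.mbs_bad ar f0
  -- pwo machinery
  have hS : (Set.univ : Set S).PartiallyWellOrderedOn (· = ·) :=
    Set.finite_univ.partiallyWellOrderedOn
  have hT := TermAux.subterms_pwo ar f0
  have hL := hT.partiallyWellOrderedOn_sublistForall₂ (r := Emb)
  have hP := hS.prod hL
  obtain ⟨m, n, hmn, heq, hsub⟩ := Set.partiallyWellOrderedOn_iff_exists_lt.1 hP
    (fun n => ((TermAux.root (g n), TermAux.children (g n)) : S × List (Term S)))
    (by
      intro n
      refine ⟨Set.mem_univ _, ?_⟩
      intro x hx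
      exact ⟨n, hx⟩)
  dsimp only at heq hsub
  -- from sublistForall₂ with equal lengths get Forall₂
  obtain ⟨l, hfor, hsl⟩ := List.sublistForall₂_iff.1 hsub
  have hlen1 : (TermAux.children (g m)).length = ar (TermAux.root (g m)) :=
    TermAux.len_children ar (hgbad.1 m)
  have hlen2 : (TermAux.children (g n)).length = ar (TermAux.root (g n)) :=
    TermAux.len_children ar (hgbad.1 n)
  have hll : l.length = (TermAux.children (g n)).length := by
    have := hfor.length_eq
    rw [← this, hlen1, heq, ← hlen2]
  have hleq : l = TermAux.children (g n) := hsl.eq_of_length hll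
  subst hleq
  obtain ⟨hlen, hget⟩ := List.forall₂_iff_get.1 hfor
  have hemb : Emb (g m) (g n) := by
    rw [TermAux.node_root_children (g m), TermAux.node_root_children (g n), ← heq]
    exact Emb.couple hlen (fun i => hget i i.isLt (by omega))
  exact hgbad.2 m n hmn hemb
end
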